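/- arXiv:1807.09120 — 2 statements merged into one kernel-verified Lean document; each statement's English description precedes it below -/
import Mathlib

section
/- Let Q ∈ ℝ^{p×p} and R ∈ ℝ^{r×r} be positive definite, and suppose L ∈ ℝ^{r×p} is such that D = A + BL has spectral radius less than 1. Define the Riccati iterates P₀ = 0 and P_{t+1} = Q + AᵀP_tA − AᵀP_tB(BᵀP_tB+R)^{-1}BᵀP_tA. Then for every T ≥ 0, P_T ≼ Σ_{t=0}^{T−1} (Dᵀ)ᵗ (Q + LᵀRL) Dᵗ in the Loewner order; consequently the sequence {P_T} is bounded above by the convergent series Σ_{t=0}^{∞} (Dᵀ)ᵗ (Q + LᵀRL) Dᵗ. -/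
open Matrix
open scoped NNReal ENNReal

/-- A real square matrix has spectral radius less than one: every complex root of its
characteristic polynomial has modulus less than one. -/
def SpecRadiusLtOne {p : ℕ} (D : Matrix (Fin p) (Fin p) ℝ) : Prop :=
  ∀ lam : ℂ, ((D.map (algebraMap ℝ ℂ)).charpoly).IsRoot lam → ‖lam‖ < 1

section aux
open Polynomial

lemma charpoly_eval_eq_det {n : ℕ} (M : Matrix (Fin n) (Fin n) ℂ) (z : ℂ) :
    M.charpoly.eval z = (Matrix.scalar (Fin n) z - M).det := by
  rw [Matrix.charpoly, ← Polynomial.coe_evalRingHom, RingHom.map_det]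
  congr 1
  ext i j
  by_cases h : i = j
  · subst h
    simp [charmatrix_apply_eq, Matrix.scalar_apply, Matrix.sub_apply, Matrix.diagonal_apply_eq]
  · simp [charmatrix_apply_ne _ _ _ h, Matrix.scalar_apply, Matrix.sub_apply,
      Matrix.diagonal_apply_ne _ h]

lemma isRoot_of_mem_spectrum {n : ℕ} (M : Matrix (Fin n) (Fin n) ℂ) (z : ℂ)
    (hz : z ∈ spectrum ℂ M) : M.charpoly.IsRoot z := by
  rw [spectrum.mem_iff] at hz
  rw [Polynomial.IsRoot, charpoly_eval_eq_det]
  by_contra hdet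
  apply hz
  apply (Matrix.isUnit_iff_isUnit_det _).mpr
  have : algebraMap ℂ (Matrix (Fin n) (Fin n) ℂ) z = Matrix.scalar (Fin n) z := rfl
  rw [this]
  exact isUnit_iff_ne_zero.mpr hdet

end aux

lemma key_identity {p r : ℕ} (Q A : Matrix (Fin p) (Fin p) ℝ) (R : Matrix (Fin r) (Fin r) ℝ)
    (B : Matrix (Fin p) (Fin r) ℝ) (Pm : Matrix (Fin p) (Fin p) ℝ)
    (K : Matrix (Fin r) (Fin p) ℝ) (H' : Matrix (Fin r) (Fin r) ℝ)
    (hPs : Pmᵀ = Pm) (hHs : H'ᵀ = H')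
    (hGH : (Bᵀ * Pm * B + R) * H' = 1) (hHG : H' * (Bᵀ * Pm * B + R) = 1) :
    (Q + Kᵀ * R * K + (A + B * K)ᵀ * Pm * (A + B * K)) -
      (Q + Aᵀ * Pm * A - Aᵀ * Pm * B * H' * (Bᵀ * Pm * A)) =
    (K + H' * (Bᵀ * Pm * A))ᵀ * (Bᵀ * Pm * B + R) * (K + H' * (Bᵀ * Pm * A)) := by
  have e1 : (K + H' * (Bᵀ * Pm * A))ᵀ * (Bᵀ * Pm * B + R) * (K + H' * (Bᵀ * Pm * A))
      = Kᵀ * (Bᵀ * Pm * B) * K + Kᵀ * R * K + Kᵀ * ((Bᵀ * Pm * B + R) * H') * (Bᵀ * Pm * A)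
        + (Aᵀ * Pm * B) * (H' * (Bᵀ * Pm * B + R)) * K
        + (Aᵀ * Pm * B) * H' * ((Bᵀ * Pm * B + R) * H') * (Bᵀ * Pm * A) := by
    simp only [transpose_add, transpose_mul, hPs, hHs, transpose_transpose]
    simp only [Matrix.add_mul, Matrix.mul_add, Matrix.mul_assoc]
    abel
  rw [e1, hGH, hHG]
  simp only [Matrix.mul_one, Matrix.one_mul]
  simp only [transpose_add, transpose_mul, hPs, transpose_transpose]
  simp only [Matrix.add_mul, Matrix.mul_add, Matrix.sub_mul, Matrix.mul_sub, Matrix.mul_assoc]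
  abel

lemma riccati_step {p r : ℕ} (Q : Matrix (Fin p) (Fin p) ℝ) (R : Matrix (Fin r) (Fin r) ℝ)
    (A : Matrix (Fin p) (Fin p) ℝ) (B : Matrix (Fin p) (Fin r) ℝ)
    (hQ : Q.PosSemidef) (hR : R.PosDef) (Pm : Matrix (Fin p) (Fin p) ℝ) (hPm : Pm.PosSemidef)
    (K : Matrix (Fin r) (Fin p) ℝ) :
    (Q + Aᵀ * Pm * A - Aᵀ * Pm * B * (Bᵀ * Pm * B + R)⁻¹ * (Bᵀ * Pm * A)).PosSemidef ∧
    ((Q + Kᵀ * R * K + (A + B * K)ᵀ * Pm * (A + B * K)) -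
      (Q + Aᵀ * Pm * A - Aᵀ * Pm * B * (Bᵀ * Pm * B + R)⁻¹ * (Bᵀ * Pm * A))).PosSemidef := by
  have hPs : Pmᵀ = Pm := by
    have := hPm.isHermitian
    rwa [Matrix.IsHermitian, conjTranspose_eq_transpose_of_trivial] at this
  have hBPB : (Bᵀ * Pm * B).PosSemidef := by
    have := hPm.conjTranspose_mul_mul_same B
    rwa [conjTranspose_eq_transpose_of_trivial] at this
  have hG : (Bᵀ * Pm * B + R).PosDef := Matrix.PosDef.posSemidef_add hBPB hR
  have hGdet : IsUnit (Bᵀ * Pm * B + R).det := hG.det_pos.ne'.isUnit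
  have hGH : (Bᵀ * Pm * B + R) * (Bᵀ * Pm * B + R)⁻¹ = 1 := Matrix.mul_nonsing_inv _ hGdet
  have hHG : (Bᵀ * Pm * B + R)⁻¹ * (Bᵀ * Pm * B + R) = 1 := Matrix.nonsing_inv_mul _ hGdet
  have hGs : (Bᵀ * Pm * B + R)ᵀ = (Bᵀ * Pm * B + R) := by
    have hRs : Rᵀ = R := by
      have := hR.isHermitian
      rwa [Matrix.IsHermitian, conjTranspose_eq_transpose_of_trivial] at this
    simp [transpose_add, transpose_mul, hPs, hRs, Matrix.mul_assoc]
  have hHs : ((Bᵀ * Pm * B + R)⁻¹)ᵀ = (Bᵀ * Pm * B + R)⁻¹ := by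
    rw [Matrix.transpose_nonsing_inv, hGs]
  constructor
  · -- use K₀ := -(G⁻¹ F)
    have hkey := key_identity Q A R B Pm (-((Bᵀ * Pm * B + R)⁻¹ * (Bᵀ * Pm * A)))
      ((Bᵀ * Pm * B + R)⁻¹) hPs hHs hGH hHG
    rw [neg_add_cancel] at hkey
    simp only [Matrix.zero_mul, Matrix.mul_zero, transpose_zero] at hkey
    have heq := sub_eq_zero.mp hkey
    rw [← heq]
    refine (hQ.add ?_).add ?_
    · have := hR.posSemidef.conjTranspose_mul_mul_same
        (-((Bᵀ * Pm * B + R)⁻¹ * (Bᵀ * Pm * A)))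
      rwa [conjTranspose_eq_transpose_of_trivial] at this
    · have := hPm.conjTranspose_mul_mul_same (A + B * -((Bᵀ * Pm * B + R)⁻¹ * (Bᵀ * Pm * A)))
      rwa [conjTranspose_eq_transpose_of_trivial] at this
  · rw [key_identity Q A R B Pm K ((Bᵀ * Pm * B + R)⁻¹) hPs hHs hGH hHG]
    have := hG.posSemidef.conjTranspose_mul_mul_same (K + (Bᵀ * Pm * B + R)⁻¹ * (Bᵀ * Pm * A))
    rwa [conjTranspose_eq_transpose_of_trivial] at this



lemma summable_pow_sandwich {p : ℕ} (D : Matrix (Fin p) (Fin p) ℝ)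
    (hstab : SpecRadiusLtOne D) (M : Matrix (Fin p) (Fin p) ℝ) (i j : Fin p) :
    Summable (fun t : ℕ => ((Dᵀ) ^ t * M * D ^ t) i j) := by
  rcases Nat.eq_zero_or_pos p with hp | hp
  · exact absurd i.isLt (by omega)
  haveI : Nonempty (Fin p) := ⟨⟨0, hp⟩⟩
  letI : NormedRing (Matrix (Fin p) (Fin p) ℂ) := Matrix.linftyOpNormedRing
  letI : NormedAlgebra ℂ (Matrix (Fin p) (Fin p) ℂ) := Matrix.linftyOpNormedAlgebra
  haveI : CompleteSpace (Matrix (Fin p) (Fin p) ℂ) := by infer_instance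
  haveI : Nontrivial (Matrix (Fin p) (Fin p) ℂ) :=
    ⟨1, 0, fun h => by
      have h2 := congrArg (fun X : Matrix (Fin p) (Fin p) ℂ => X ⟨0, hp⟩ ⟨0, hp⟩) h
      simp [Matrix.one_apply_eq] at h2⟩
  set Dc : Matrix (Fin p) (Fin p) ℂ := D.map (algebraMap ℝ ℂ) with hDc
  have hρ : spectralRadius ℂ Dc < 1 := by
    have h := spectrum.spectralRadius_lt_of_forall_lt Dc (r := 1) ?_
    · simpa using h
    · intro z hz
      have habs := hstab z (isRoot_of_mem_spectrum _ z hz)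
      have : ‖z‖ < 1 := by exact habs
      rw [← NNReal.coe_lt_coe]
      simpa using this
  obtain ⟨r, hr1, hr2⟩ := ENNReal.lt_iff_exists_nnreal_btwn.mp hρ
  have hrlt1 : (r : ℝ) < 1 := by exact_mod_cast hr2
  have hgel := spectrum.pow_nnnorm_pow_one_div_tendsto_nhds_spectralRadius Dc
  have hev0 : ∀ᶠ t : ℕ in Filter.atTop, (‖Dc ^ t‖₊ : ENNReal) ^ (1 / (t:ℝ)) < (r : ENNReal) :=
    hgel.eventually_lt_const hr1
  have hev1 : ∀ᶠ t in Filter.atTop, ‖Dc ^ t‖ ≤ (r : ℝ) ^ t := by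
    filter_upwards [hev0, Filter.eventually_ge_atTop 1] with t ht ht1
    have ht0 : (t : ℝ) ≠ 0 := by positivity
    have h2 := ENNReal.rpow_lt_rpow ht (show (0:ℝ) < (t:ℝ) by positivity)
    rw [← ENNReal.rpow_mul, one_div_mul_cancel ht0, ENNReal.rpow_one,
      ENNReal.rpow_natCast, ← ENNReal.coe_pow, ENNReal.coe_lt_coe] at h2
    have h3 : ‖Dc ^ t‖₊ ≤ r ^ t := h2.le
    calc ‖Dc ^ t‖ = ((‖Dc ^ t‖₊ : ℝ≥0) : ℝ) := rfl
      _ ≤ ((r ^ t : ℝ≥0) : ℝ) := by exact_mod_cast h3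
      _ = (r : ℝ) ^ t := by push_cast; ring
  have entry_le : ∀ (X : Matrix (Fin p) (Fin p) ℂ) (k l : Fin p), ‖X k l‖ ≤ ‖X‖ := by
    intro X k l
    have h : ‖X k l‖₊ ≤ ‖X‖₊ := by
      rw [Matrix.linfty_opNNNorm_def]
      exact le_trans (Finset.single_le_sum (f := fun l' => ‖X k l'‖₊)
        (fun _ _ => zero_le) (Finset.mem_univ l)) (Finset.le_sup (f := fun i => ∑ j : Fin p, ‖X i j‖₊) (Finset.mem_univ k))
    exact_mod_cast h
  have hmap : ∀ t : ℕ, Dc ^ t = (D ^ t).map (algebraMap ℝ ℂ) := by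
    intro t
    have h : Dc = (algebraMap ℝ ℂ).mapMatrix D := rfl
    rw [h, ← map_pow]
    rfl
  have hent : ∀ᶠ t in Filter.atTop, ∀ k l : Fin p, |(D ^ t) k l| ≤ (r : ℝ) ^ t := by
    filter_upwards [hev1] with t ht k l
    have h1 : |(D ^ t) k l| = ‖(Dc ^ t) k l‖ := by
      rw [hmap t, Matrix.map_apply]
      simp [Real.norm_eq_abs]
    rw [h1]
    exact le_trans (entry_le _ k l) ht
  set C : ℝ := ∑ l : Fin p, ∑ k : Fin p, |M k l| with hC
  apply Summable.of_norm_bounded_eventually_nat (g := fun t => C * ((r:ℝ) * (r:ℝ)) ^ t)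
  · apply Summable.mul_left
    have h01 : (0:ℝ) ≤ (r:ℝ) := r.coe_nonneg
    apply summable_geometric_of_lt_one (by positivity)
    nlinarith [mul_le_mul_of_nonneg_left hrlt1.le h01]
  · filter_upwards [hent] with t ht
    have hexp : ((Dᵀ) ^ t * M * D ^ t) i j
        = ∑ l : Fin p, (∑ k : Fin p, (D ^ t) k i * M k l) * (D ^ t) l j := by
      have h1 : (Dᵀ) ^ t = (D ^ t)ᵀ := (Matrix.transpose_pow D t).symm
      rw [h1]
      simp only [Matrix.mul_apply, Matrix.transpose_apply, Finset.sum_mul]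
    rw [Real.norm_eq_abs, hexp]
    have hc0 : (0:ℝ) ≤ (r : ℝ) ^ t := by positivity
    calc |∑ l : Fin p, (∑ k : Fin p, (D ^ t) k i * M k l) * (D ^ t) l j|
        ≤ ∑ l : Fin p, |(∑ k : Fin p, (D ^ t) k i * M k l) * (D ^ t) l j| :=
          Finset.abs_sum_le_sum_abs _ _
      _ ≤ ∑ l : Fin p, (∑ k : Fin p, |M k l| * ((r:ℝ)^t * (r:ℝ)^t)) := by
          apply Finset.sum_le_sum
          intro l _
          rw [abs_mul]
          calc |∑ k : Fin p, (D ^ t) k i * M k l| * |(D ^ t) l j|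
              ≤ (∑ k : Fin p, |M k l| * (r:ℝ)^t) * (r:ℝ)^t := by
                apply mul_le_mul _ (ht l j) (abs_nonneg _)
                · apply Finset.sum_nonneg
                  intro k _
                  positivity
                calc |∑ k : Fin p, (D ^ t) k i * M k l|
                    ≤ ∑ k : Fin p, |(D ^ t) k i * M k l| := Finset.abs_sum_le_sum_abs _ _
                  _ ≤ ∑ k : Fin p, |M k l| * (r:ℝ)^t := by
                      apply Finset.sum_le_sum
                      intro k _
                      rw [abs_mul, mul_comm]
                      exact mul_le_mul_of_nonneg_left (ht k i) (abs_nonneg _)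
            _ = ∑ k : Fin p, |M k l| * ((r:ℝ)^t * (r:ℝ)^t) := by
                rw [Finset.sum_mul]
                apply Finset.sum_congr rfl
                intro k _
                ring
      _ = C * ((r:ℝ) * (r:ℝ)) ^ t := by
          rw [hC, Finset.sum_mul]
          apply Finset.sum_congr rfl
          intro l _
          rw [Finset.sum_mul]
          apply Finset.sum_congr rfl
          intro k _
          rw [mul_pow]


/-- if some feedback `L` makes `D = A + BL` have spectral radius less than one,
then every Riccati iterate (started at `0`) is dominated, in the Loewner order, by the partial
sums of the series `∑ₜ (Dᵀ)ᵗ (Q + LᵀRL) Dᵗ`; moreover that series converges (entrywise). -/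
theorem riccati_iterates_bounded {p r : ℕ}
    (Q : Matrix (Fin p) (Fin p) ℝ) (R : Matrix (Fin r) (Fin r) ℝ)
    (A : Matrix (Fin p) (Fin p) ℝ) (B : Matrix (Fin p) (Fin r) ℝ)
    (hQ : Q.PosDef) (hR : R.PosDef)
    (L : Matrix (Fin r) (Fin p) ℝ)
    (D : Matrix (Fin p) (Fin p) ℝ) (hD : D = A + B * L)
    (hstab : SpecRadiusLtOne D)
    (P : ℕ → Matrix (Fin p) (Fin p) ℝ)
    (hP0 : P 0 = 0)
    (hPrec : ∀ t : ℕ, P (t + 1)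
      = Q + Aᵀ * P t * A - Aᵀ * P t * B * (Bᵀ * P t * B + R)⁻¹ * (Bᵀ * P t * A)) :
    (∀ T : ℕ,
      ((∑ t ∈ Finset.range T, (Dᵀ) ^ t * (Q + Lᵀ * R * L) * D ^ t) - P T).PosSemidef) ∧
      ∀ i j : Fin p, Summable (fun t : ℕ => ((Dᵀ) ^ t * (Q + Lᵀ * R * L) * D ^ t) i j) := by
  constructor
  · -- Loewner bound by induction
    have main : ∀ T : ℕ, (P T).PosSemidef ∧
        ((∑ t ∈ Finset.range T, (Dᵀ) ^ t * (Q + Lᵀ * R * L) * D ^ t) - P T).PosSemidef := by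
      intro T
      induction T with
      | zero =>
        rw [hP0]
        simp only [Finset.range_zero, Finset.sum_empty, sub_zero]
        exact ⟨Matrix.PosSemidef.zero, Matrix.PosSemidef.zero⟩
      | succ T ih =>
        obtain ⟨h1, h2⟩ := ih
        obtain ⟨hPn, hdom⟩ := riccati_step Q R A B hQ.posSemidef hR (P T) h1 L
        refine ⟨by rw [hPrec T]; exact hPn, ?_⟩
        have hsum : (∑ t ∈ Finset.range (T + 1), (Dᵀ) ^ t * (Q + Lᵀ * R * L) * D ^ t)
            = (Q + Lᵀ * R * L)
              + Dᵀ * (∑ t ∈ Finset.range T, (Dᵀ) ^ t * (Q + Lᵀ * R * L) * D ^ t) * D := by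
          rw [Finset.sum_range_succ']
          simp only [pow_zero, Matrix.one_mul, Matrix.mul_one]
          rw [add_comm]
          congr 1
          rw [Finset.mul_sum, Finset.sum_mul]
          apply Finset.sum_congr rfl
          intro t _
          rw [pow_succ' (Dᵀ) t, pow_succ D t]
          noncomm_ring
        have keyeq : (∑ t ∈ Finset.range (T + 1), (Dᵀ) ^ t * (Q + Lᵀ * R * L) * D ^ t) - P (T + 1)
            = ((Q + Lᵀ * R * L + (A + B * L)ᵀ * P T * (A + B * L)) - P (T + 1))
              + Dᵀ * ((∑ t ∈ Finset.range T, (Dᵀ) ^ t * (Q + Lᵀ * R * L) * D ^ t) - P T) * D := by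
          rw [hsum, hD]
          rw [Matrix.mul_sub, Matrix.sub_mul]
          abel
        rw [keyeq, hPrec T]
        refine Matrix.PosSemidef.add hdom ?_
        have := h2.conjTranspose_mul_mul_same D
        rwa [conjTranspose_eq_transpose_of_trivial] at this
    exact fun T => (main T).2
  · exact fun i j => summable_pow_sandwich D hstab (Q + Lᵀ * R * L) i j
end

section
/- Let p, r ≥ 1, q = p + r, and k ≥ 1 with kp ≥ q. Let L₁,…,L_k ∈ ℝ^{r×p} be random matrices such that all kp columns (each a random vector in ℝ^r) are mutually independent and each has a linearly full rank distribution. Let M = [ [I_p; L₁], …, [I_p; L_k] ] ∈ ℝ^{q×(kp)} be the matrix whose i-th block of p columns stacks I_p on top of L_i. Then, with probability one, rank(M) = q. -/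
open Matrix MeasureTheory ProbabilityTheory

/-- A random vector in `ℝ^m` has a linearly full rank distribution: it lies in any fixed
affine hyperplane with probability zero. -/
def LinFullRankDistribution {m : ℕ} {Ω : Type*} [MeasurableSpace Ω] (μ : Measure Ω)
    (X : Ω → (Fin m → ℝ)) : Prop :=
  ∀ (a : Fin m → ℝ) (c : ℝ), a ≠ 0 → μ {ω | a ⬝ᵥ X ω = c} = 0

/-- rows of a rectangular real matrix are linearly independent iff its rank is full. -/
lemma li_rows_iff_rank {j n : ℕ} (A : Matrix (Fin j) (Fin n) ℝ) :
    LinearIndependent ℝ (fun i => A i) ↔ A.rank = j := by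
  rw [linearIndependent_iff_card_eq_finrank_span, Matrix.rank_eq_finrank_span_row]
  simp [Set.finrank, eq_comm]
  rfl

lemma li_iff_gram_det {m n : ℕ} (v : Fin m → Fin n → ℝ) :
    LinearIndependent ℝ v ↔ (Matrix.of fun i l => v i ⬝ᵥ v l).det ≠ 0 := by
  have hA : (Matrix.of fun i l => v i ⬝ᵥ v l) = (Matrix.of v) * (Matrix.of v)ᵀ := by
    ext i l
    simp [Matrix.mul_apply, dotProduct]
  calc LinearIndependent ℝ v
      ↔ (Matrix.of v).rank = m := li_rows_iff_rank (Matrix.of v)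
    _ ↔ (Matrix.of fun i l => v i ⬝ᵥ v l).rank = m := by
        rw [hA, Matrix.rank_self_mul_transpose]
    _ ↔ LinearIndependent ℝ (fun i => (Matrix.of fun i l => v i ⬝ᵥ v l) i) :=
        (li_rows_iff_rank _).symm
    _ ↔ IsUnit (Matrix.of fun i l => v i ⬝ᵥ v l) := Matrix.linearIndependent_rows_iff_isUnit
    _ ↔ (Matrix.of fun i l => v i ⬝ᵥ v l).det ≠ 0 := by
        rw [Matrix.isUnit_iff_isUnit_det, isUnit_iff_ne_zero]

lemma measurableSet_li {m n : ℕ} :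
    MeasurableSet {v : Fin m → Fin n → ℝ | LinearIndependent ℝ v} := by
  have h : {v : Fin m → Fin n → ℝ | LinearIndependent ℝ v}
      = (fun v : Fin m → Fin n → ℝ => (Matrix.of fun i l => v i ⬝ᵥ v l).det) ⁻¹' {(0:ℝ)}ᶜ := by
    ext v
    simp [li_iff_gram_det v]
  rw [h]
  have hmeas : Measurable (fun v : Fin m → Fin n → ℝ => (Matrix.of fun i l => v i ⬝ᵥ v l).det) := by
    simp only [Matrix.det_apply']
    refine Finset.measurable_sum _ (fun σ _ => Measurable.const_mul ?_ _)
    refine Finset.measurable_prod _ (fun i _ => ?_)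
    simp only [Matrix.of_apply, dotProduct]
    refine Finset.measurable_sum _ (fun s _ => Measurable.mul ?_ ?_)
    · exact (measurable_pi_apply s).comp (measurable_pi_apply _)
    · exact (measurable_pi_apply s).comp (measurable_pi_apply _)
  exact hmeas (measurableSet_singleton 0).compl

lemma indep_slice_null {Ω E F : Type*} [MeasurableSpace Ω] [MeasurableSpace E] [MeasurableSpace F]
    (μ : Measure Ω) [IsProbabilityMeasure μ] {X : Ω → E} {Z : Ω → F}
    (hX : Measurable X) (hZ : Measurable Z) (hind : IndepFun X Z μ)
    {S : Set (E × F)} (hS : MeasurableSet S)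
    (h0 : ∀ z, μ {ω | (X ω, z) ∈ S} = 0) :
    μ {ω | (X ω, Z ω) ∈ S} = 0 := by
  have hmap := (indepFun_iff_map_prod_eq_prod_map_map hX.aemeasurable hZ.aemeasurable).mp hind
  have h1 : μ {ω | (X ω, Z ω) ∈ S} = μ.map (fun ω => (X ω, Z ω)) S :=
    (Measure.map_apply (hX.prodMk hZ) hS).symm
  rw [h1, hmap, Measure.prod_apply_symm hS]
  have h2 : ∀ z, (μ.map X) ((fun x => (x, z)) ⁻¹' S) = 0 := by
    intro z
    rw [Measure.map_apply hX (hS.preimage measurable_prodMk_right)]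
    exact h0 z
  simp [h2]

lemma almost_surely_li {Ω ι : Type*} [MeasurableSpace Ω] [Fintype ι] [DecidableEq ι]
    (μ : Measure Ω) [IsProbabilityMeasure μ] {n : ℕ} (X : ι → Ω → (Fin n → ℝ))
    (hXmeas : ∀ i, Measurable (X i))
    (hindep : iIndepFun X μ)
    (hfull : ∀ i, LinFullRankDistribution μ (X i)) :
    ∀ (m : ℕ), m ≤ n → ∀ (α β : Fin m → ι), Function.Injective α → (∀ s t, α s ≠ β t) →
      μ {ω | ¬ LinearIndependent ℝ (fun t => X (α t) ω - X (β t) ω)} = 0 := by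
  intro m
  induction m with
  | zero =>
    intro _ α β _ _
    have : {ω | ¬ LinearIndependent ℝ (fun t : Fin 0 => X (α t) ω - X (β t) ω)} = ∅ := by
      ext ω
      simp [linearIndependent_empty_type]
    simp [this]
  | succ m IH =>
    intro hm α β hαinj hdisj
    have hm' : m ≤ n := le_trans (Nat.le_succ m) hm
    set i0 : ι := α (Fin.last m) with hi0
    -- the previous-columns event
    set E1 : Set Ω :=
      {ω | ¬ LinearIndependent ℝ (fun t : Fin m => X (α t.castSucc) ω - X (β t.castSucc) ω)}
      with hE1def
    have hE1 : μ E1 = 0 := by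
      refine IH hm' (fun t => α t.castSucc) (fun t => β t.castSucc)
        (fun s t hst => ?_) (fun s t => hdisj _ _)
      exact Fin.castSucc_injective m (hαinj hst)
    -- the new-column event
    have hne : ∀ t : Fin m, α t.castSucc ≠ i0 := by
      intro t h
      exact absurd (hαinj h) (Fin.ne_last_of_lt (Fin.castSucc_lt_last t))
    have hneβ : ∀ t : Fin (m+1), β t ≠ i0 := fun t h => (hdisj (Fin.last m) t) h.symm
    set F := (Fin m → Fin n → ℝ) × (Fin m → Fin n → ℝ) × (Fin n → ℝ) with hF
    set Z : Ω → F := fun ω =>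
      (fun t => X (α t.castSucc) ω, fun t => X (β t.castSucc) ω, X (β (Fin.last m)) ω) with hZdef
    set S : Set ((Fin n → ℝ) × F) :=
      {q | LinearIndependent ℝ (fun t => q.2.1 t - q.2.2.1 t) ∧
        ¬ LinearIndependent ℝ (Fin.snoc (fun t => q.2.1 t - q.2.2.1 t) (q.1 - q.2.2.2))}
      with hSdef
    have hZmeas : Measurable Z := by
      refine Measurable.prodMk ?_ (Measurable.prodMk ?_ ?_)
      · exact measurable_pi_lambda _ (fun t => hXmeas _)
      · exact measurable_pi_lambda _ (fun t => hXmeas _)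
      · exact hXmeas _
    have hSmeas : MeasurableSet S := by
      have hmap1 : Measurable (fun q : (Fin n → ℝ) × F => (fun t => q.2.1 t - q.2.2.1 t)) := by
        refine measurable_pi_lambda _ (fun t => ?_)
        refine measurable_pi_lambda _ (fun s => Measurable.sub ?_ ?_)
        · exact ((measurable_pi_apply s).comp ((measurable_pi_apply t).comp
            (measurable_fst.comp measurable_snd)))
        · exact ((measurable_pi_apply s).comp ((measurable_pi_apply t).comp
            ((measurable_fst.comp measurable_snd).comp measurable_snd)))
      have hmap2 : Measurable (fun q : (Fin n → ℝ) × F =>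
          (Fin.snoc (fun t => q.2.1 t - q.2.2.1 t) (q.1 - q.2.2.2) : Fin (m+1) → Fin n → ℝ)) := by
        refine measurable_pi_lambda _ (fun t => ?_)
        induction t using Fin.lastCases with
        | last =>
          simp only [Fin.snoc_last]
          refine measurable_pi_lambda _ (fun s => Measurable.sub ?_ ?_)
          · exact (measurable_pi_apply s).comp measurable_fst
          · exact (measurable_pi_apply s).comp
              ((measurable_snd.comp (measurable_snd.comp measurable_snd)))
        | cast t =>
          simp only [Fin.snoc_castSucc]
          refine measurable_pi_lambda _ (fun s => Measurable.sub ?_ ?_)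
          · exact ((measurable_pi_apply s).comp ((measurable_pi_apply t).comp
              (measurable_fst.comp measurable_snd)))
          · exact ((measurable_pi_apply s).comp ((measurable_pi_apply t).comp
              ((measurable_fst.comp measurable_snd).comp measurable_snd)))
      exact (hmap1 measurableSet_li).inter ((hmap2 measurableSet_li).compl)
    -- independence of X i0 and Z
    have hind : IndepFun (X i0) Z μ := by
      have hbase := hindep.indepFun_finset {i0} {i0}ᶜ disjoint_compl_right hXmeas
      have memT : ∀ i : ι, i ≠ i0 → i ∈ ({i0}ᶜ : Finset ι) := by
        intro i h
        simp [Finset.mem_compl, h]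
      let φ1 : (({i0} : Finset ι) → Fin n → ℝ) → (Fin n → ℝ) :=
        fun v => v ⟨i0, Finset.mem_singleton_self i0⟩
      let φ2 : (({i0}ᶜ : Finset ι) → Fin n → ℝ) → F := fun v =>
        (fun t => v ⟨α t.castSucc, memT _ (hne t)⟩,
         fun t => v ⟨β t.castSucc, memT _ (hneβ _)⟩,
         v ⟨β (Fin.last m), memT _ (hneβ _)⟩)
      have hφ1 : Measurable φ1 := measurable_pi_apply _
      have hφ2 : Measurable φ2 := by
        refine Measurable.prodMk ?_ (Measurable.prodMk ?_ ?_)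
        · exact measurable_pi_lambda _ (fun t => measurable_pi_apply _)
        · exact measurable_pi_lambda _ (fun t => measurable_pi_apply _)
        · exact measurable_pi_apply _
      exact hbase.comp hφ1 hφ2
    -- the new-column event has measure zero
    have hE2 : μ {ω | (X i0 ω, Z ω) ∈ S} = 0 := by
      refine indep_slice_null μ (hXmeas i0) hZmeas hind hSmeas ?_
      rintro ⟨u, w, x0⟩
      by_cases hg : LinearIndependent ℝ (fun t => u t - w t)
      · -- span is a proper subspace; pick a normal functional
        set g : Fin m → Fin n → ℝ := fun t => u t - w t with hgdef
        have hlt : Submodule.span ℝ (Set.range g) < ⊤ := by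
          rw [lt_top_iff_ne_top]
          intro htop
          have h1 : (Set.range g).finrank ℝ ≤ m := by
            simpa using finrank_range_le_card g
          rw [Set.finrank, htop] at h1
          have h2 : Module.finrank ℝ (Fin n → ℝ) = n := by
            simp [Module.finrank_fintype_fun_eq_card]
          rw [finrank_top, h2] at h1
          omega
        obtain ⟨f, hf0, hfbot⟩ :=
          Submodule.exists_dual_map_eq_bot_of_lt_top hlt inferInstance
        set a : Fin n → ℝ := fun i => f (fun j => if i = j then 1 else 0) with hadef
        have hfa : ∀ x, f x = a ⬝ᵥ x := by
          intro x
          rw [LinearMap.pi_apply_eq_sum_univ f x]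
          simp [dotProduct, mul_comm, hadef]
        have ha : a ≠ 0 := by
          intro h
          apply hf0
          refine LinearMap.ext (fun x => ?_)
          rw [hfa x, h]
          simp
        refine measure_mono_null (fun ω hω => ?_) (hfull i0 a (a ⬝ᵥ x0) ha)
        · obtain ⟨h1, h2⟩ := hω
          have hx : X i0 ω - x0 ∈ Submodule.span ℝ (Set.range g) := by
            by_contra hx
            exact h2 (linearIndependent_fin_snoc.mpr ⟨h1, hx⟩)
          have : f (X i0 ω - x0) = 0 := by
            have := Submodule.mem_map_of_mem (f := f) hx
            rw [hfbot] at this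
            simpa using this
          rw [hfa] at this
          have := sub_eq_zero.mp (by rwa [dotProduct_sub] at this)
          exact this
      · have : {ω | (X i0 ω, (u, w, x0)) ∈ S} = ∅ := by
          ext ω
          simp only [hSdef, Set.mem_setOf_eq, Set.mem_empty_iff_false, iff_false]
          rintro ⟨h1, _⟩
          exact hg h1
        simp [this]
    -- combine
    have hsub : {ω | ¬ LinearIndependent ℝ (fun t : Fin (m+1) => X (α t) ω - X (β t) ω)}
        ⊆ E1 ∪ {ω | (X i0 ω, Z ω) ∈ S} := by
      intro ω hω
      simp only [Set.mem_setOf_eq] at hω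
      by_cases h1 : LinearIndependent ℝ (fun t : Fin m => X (α t.castSucc) ω - X (β t.castSucc) ω)
      · right
        refine ⟨h1, ?_⟩
        intro hsnoc
        apply hω
        have heq : (fun t : Fin (m+1) => X (α t) ω - X (β t) ω)
            = Fin.snoc (fun t : Fin m => X (α t.castSucc) ω - X (β t.castSucc) ω)
              (X i0 ω - X (β (Fin.last m)) ω) := by
          funext t
          induction t using Fin.lastCases with
          | last => simp [Fin.snoc_last, hi0]
          | cast t => simp [Fin.snoc_castSucc]
        rw [heq]
        exact hsnoc
      · left
        exact h1
    exact measure_mono_null hsub (measure_union_null hE1 hE2)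

/-- if all `kp` columns of the random feedbacks `L₁, …, L_k` are independent
with linearly full rank distributions and `kp ≥ q = p + r`, then the matrix
`M = [[I_p; L₁], …, [I_p; L_k]]` has full rank `q` almost surely. -/
theorem random_feedback_matrix_full_rank {p r k : ℕ}
    (hp : 1 ≤ p) (hr : 1 ≤ r) (hk : 1 ≤ k) (hkp : p + r ≤ k * p)
    {Ω : Type*} [MeasurableSpace Ω] (μ : Measure Ω) [IsProbabilityMeasure μ]
    (L : Fin k → Ω → Matrix (Fin r) (Fin p) ℝ)
    (hmeas : ∀ (i : Fin k) (a : Fin r) (b : Fin p), Measurable fun ω => L i ω a b)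
    (hindep : iIndepFun
      (fun (x : Fin k × Fin p) (ω : Ω) (s : Fin r) => L x.1 ω s x.2) μ)
    (hfull : ∀ x : Fin k × Fin p,
      LinFullRankDistribution μ (fun ω (s : Fin r) => L x.1 ω s x.2)) :
    μ {ω | (Matrix.of fun (a : Fin p ⊕ Fin r) (x : Fin k × Fin p) =>
        Matrix.fromRows (1 : Matrix (Fin p) (Fin p) ℝ) (L x.1 ω) a x.2).rank = p + r} = 1 := by
  classical
  -- basic index arithmetic
  have hk2 : 2 ≤ k := by
    rcases Nat.lt_or_ge k 2 with h | h
    · have hk1 : k = 1 := by omega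
      subst hk1
      simp only [one_mul] at hkp
      omega
    · exact h
  have hkk : k * p = (k - 1) * p + p := by
    cases k with
    | zero => omega
    | succ k => simp [Nat.succ_sub_one, Nat.succ_mul]
  have hr' : r ≤ (k - 1) * p := by omega
  -- the random columns
  set X : Fin k × Fin p → Ω → (Fin r → ℝ) := fun x ω s => L x.1 ω s x.2 with hXdef
  have hXmeas : ∀ x, Measurable (X x) :=
    fun x => measurable_pi_lambda _ (fun s => hmeas x.1 s x.2)
  -- column selections
  set ψ : Fin r → Fin (k - 1) × Fin p :=
    fun s => finProdFinEquiv.symm (Fin.castLE hr' s) with hψdef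
  have hψinj : Function.Injective ψ :=
    finProdFinEquiv.symm.injective.comp (Fin.castLE_injective hr')
  set α : Fin r → Fin k × Fin p :=
    fun s => (⟨(ψ s).1.1 + 1, by have := (ψ s).1.2; omega⟩, (ψ s).2) with hαdef
  set β : Fin r → Fin k × Fin p := fun s => (⟨0, by omega⟩, (ψ s).2) with hβdef
  have hαinj : Function.Injective α := by
    intro s t h
    apply hψinj
    have h1 := congrArg (fun z => (z.1 : Fin k).1) h
    have h2 := congrArg (fun z => z.2) h
    simp only [hαdef] at h1 h2
    have : (ψ s).1 = (ψ t).1 := Fin.ext (by omega)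
    exact Prod.ext this h2
  have hdisj : ∀ s t, α s ≠ β t := by
    intro s t h
    have := congrArg (fun z => (z.1 : Fin k).1) h
    simp [hαdef, hβdef] at this
  -- the a.s. linear independence of the difference columns
  have hLI := almost_surely_li μ X hXmeas hindep hfull r le_rfl α β hαinj hdisj
  -- deterministic implication: linear independence gives full rank
  have hdet : ∀ ω, LinearIndependent ℝ (fun t => X (α t) ω - X (β t) ω) →
      (Matrix.of fun (a : Fin p ⊕ Fin r) (x : Fin k × Fin p) =>
        Matrix.fromRows (1 : Matrix (Fin p) (Fin p) ℝ) (L x.1 ω) a x.2).rank = p + r := by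
    intro ω hli
    set i₀ : Fin k := ⟨0, by omega⟩ with hi₀
    set M : Matrix (Fin p ⊕ Fin r) (Fin k × Fin p) ℝ :=
      Matrix.of fun (a : Fin p ⊕ Fin r) (x : Fin k × Fin p) =>
        Matrix.fromRows (1 : Matrix (Fin p) (Fin p) ℝ) (L x.1 ω) a x.2 with hMdef
    set φ : Fin p ⊕ Fin r → Fin k × Fin p := Sum.elim (fun j => (i₀, j)) α with hφdef
    set N : Matrix (Fin p ⊕ Fin r) (Fin p ⊕ Fin r) ℝ := M.submatrix id φ with hNdef
    set B : Matrix (Fin p) (Fin r) ℝ :=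
      Matrix.of fun j s => if j = (ψ s).2 then (1:ℝ) else 0 with hBdef
    set C : Matrix (Fin r) (Fin p) ℝ := L i₀ ω with hCdef
    set D : Matrix (Fin r) (Fin r) ℝ :=
      Matrix.of fun s' s => L (α s).1 ω s' ((ψ s).2) with hDdef
    have hNeq : N = Matrix.fromBlocks 1 B C D := by
      ext a x
      cases a with
      | inl i =>
        cases x with
        | inl j => simp [hNdef, hMdef, hφdef, Matrix.one_apply]
        | inr s => simp [hNdef, hMdef, hφdef, hαdef, hBdef, Matrix.one_apply]
      | inr s' =>
        cases x with
        | inl j => simp [hNdef, hMdef, hφdef, hCdef]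
        | inr s => simp [hNdef, hMdef, hφdef, hαdef, hDdef]
    set G : Matrix (Fin r) (Fin r) ℝ :=
      Matrix.of fun s' s => (X (α s) ω - X (β s) ω) s' with hGdef
    have hCB : D - C * B = G := by
      ext s' s
      simp [hDdef, hCdef, hBdef, hGdef, Matrix.mul_apply, mul_ite, hXdef, hαdef, hβdef,
        Matrix.sub_apply]
    have hGunit : IsUnit G := by
      rw [← Matrix.linearIndependent_cols_iff_isUnit]
      have : (fun s => Gᵀ s) = (fun t => X (α t) ω - X (β t) ω) := by
        funext s; ext s'; simp [hGdef]
      rw [show G.col = fun s => Gᵀ s from rfl, this]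
      exact hli
    have hNunit : IsUnit N := by
      rw [Matrix.isUnit_iff_isUnit_det, hNeq, Matrix.det_fromBlocks_one₁₁, hCB,
        ← Matrix.isUnit_iff_isUnit_det]
      exact hGunit
    have hrankN : N.rank = p + r := by
      rw [Matrix.rank_of_isUnit N hNunit]
      simp
    have hle1 : N.rank ≤ M.rank := by
      rw [Matrix.rank_eq_finrank_span_cols, Matrix.rank_eq_finrank_span_cols]
      refine Submodule.finrank_mono (Submodule.span_mono ?_)
      rintro _ ⟨x, rfl⟩
      exact ⟨φ x, by ext a; simp [hNdef]⟩
    have hle2 : M.rank ≤ p + r := by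
      have := M.rank_le_card_height
      simpa using this
    have : M.rank = p + r := le_antisymm hle2 (by omega)
    exact this
  -- measure computation
  set T : Set Ω := {ω | (Matrix.of fun (a : Fin p ⊕ Fin r) (x : Fin k × Fin p) =>
      Matrix.fromRows (1 : Matrix (Fin p) (Fin p) ℝ) (L x.1 ω) a x.2).rank = p + r} with hTdef
  have hTc : μ Tᶜ = 0 := by
    refine measure_mono_null (fun ω hω => ?_) hLI
    intro hli
    exact hω (hdet ω hli)
  have h1 : (1 : ENNReal) ≤ μ T := by
    have h2 := measure_union_le (μ := μ) T Tᶜ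
    rw [Set.union_compl_self, measure_univ, hTc, add_zero] at h2
    exact h2
  exact le_antisymm prob_le_one h1
end
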